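/- Let f₀^{(m)}: S² → ℂP^m be a holomorphic curve with harmonic sequence f₀, f₁, ..., f_m (the f_i being the local sections defined by Frenet framing). Then ⟨f₀, conj(f₀)⟩ = 0 identically on S² if and only if ⟨f₁, conj(f₀)⟩ = 0 identically on S². -/

import Mathlib

open Finset Bornology Set

/-- Let `f₀ : S² → ℂPᵐ` be a linearly full holomorphic curve with
nowhere-zero holomorphic lift `F : ℂ → ℂ^{m+1}`, and let
`f₁ = ∂f₀ - (⟨∂f₀,f₀⟩_H/|f₀|²) f₀` be its first Frenet derivative. Then the bilinear
pairing `⟨f₀, conj f₀⟩ = Σ (f₀)ᵢ²` vanishes identically iff `⟨f₁, conj f₀⟩ = Σ (f₁)ᵢ (f₀)ᵢ`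
vanishes identically. -/
theorem isotropy_f0_iff_f1 (m : ℕ) (hm : 1 ≤ m) (F : ℂ → Fin (m + 1) → ℂ)
    (hhol : ∀ i, Differentiable ℂ fun z => F z i)
    (hnz : ∀ z, F z ≠ 0)
    (hfull : ∀ v : Fin (m + 1) → ℂ,
      (∀ z, ∑ i, F z i * starRingEnd ℂ (v i) = 0) → v = 0)
    (f1 : ℂ → Fin (m + 1) → ℂ)
    (hf1 : ∀ z i, f1 z i = deriv (fun w => F w i) z -
      ((∑ j, deriv (fun w => F w j) z * starRingEnd ℂ (F z j)) /
        ((∑ j, Complex.normSq (F z j) : ℝ) : ℂ)) * F z i) :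
    (∀ z, ∑ i, F z i * F z i = 0) ↔ (∀ z, ∑ i, f1 z i * F z i = 0) := by
  classical
  set D : ℂ → Fin (m + 1) → ℂ := fun z i => deriv (fun w => F w i) z with hDdef
  set g : ℂ → ℂ := fun z => ∑ i, F z i * F z i with hgdef
  set A : ℂ → ℂ := fun z => ∑ j, D z j * starRingEnd ℂ (F z j) with hAdef
  set R : ℂ → ℝ := fun z => ∑ j, Complex.normSq (F z j) with hRdef
  set Sg : ℂ → ℂ := fun z => ∑ i, D z i * F z i with hSgdef
  have hRpos : ∀ z, 0 < R z := by
    intro z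
    obtain ⟨i, hi⟩ := Function.ne_iff.1 (hnz z)
    exact Finset.sum_pos' (fun j _ => Complex.normSq_nonneg _)
      ⟨i, Finset.mem_univ i, Complex.normSq_pos.2 hi⟩
  have hRne : ∀ z, ((R z : ℝ) : ℂ) ≠ 0 := fun z =>
    Complex.ofReal_ne_zero.2 (ne_of_gt (hRpos z))
  have expand : ∀ z, (∑ i, f1 z i * F z i) = Sg z - A z / ((R z : ℝ) : ℂ) * g z := by
    intro z
    have h1 : ∀ i ∈ Finset.univ, f1 z i * F z i
        = D z i * F z i - A z / ((R z : ℝ) : ℂ) * (F z i * F z i) := by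
      intro i _
      rw [hf1 z i]
      simp only [hDdef, hAdef, hRdef]
      ring
    rw [Finset.sum_congr rfl h1, Finset.sum_sub_distrib, ← Finset.mul_sum]
  have hFd : ∀ (i : Fin (m + 1)) (z : ℂ), HasDerivAt (fun w => F w i) (D z i) z :=
    fun i z => ((hhol i) z).hasDerivAt
  have hg' : ∀ z, HasDerivAt g (2 * Sg z) z := by
    intro z
    have h : HasDerivAt g (∑ i, (D z i * F z i + F z i * D z i)) z :=
      HasDerivAt.fun_sum fun i _ => (hFd i z).mul (hFd i z)
    have e : (∑ i, (D z i * F z i + F z i * D z i)) = 2 * Sg z := by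
      rw [Finset.sum_add_distrib, two_mul]
      simp only [hSgdef]
      congr 1
      exact Finset.sum_congr rfl fun i _ => mul_comm _ _
    rw [← e]
    exact h
  constructor
  · -- easy direction
    intro h0 z
    have hgconst : g = fun _ => (0 : ℂ) := funext h0
    have h1 : HasDerivAt g 0 z := by rw [hgconst]; exact hasDerivAt_const z 0
    have h2 : 2 * Sg z = 0 := (hg' z).unique h1
    have h3 : Sg z = 0 := by
      have := mul_eq_zero.1 h2
      rcases this with h | h
      · norm_num at h
      · exact h
    have h4 : g z = 0 := h0 z
    rw [expand z, h3, h4]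
    ring
  · -- hard direction
    intro h1
    by_contra hng
    push_neg at hng
    obtain ⟨z₀, hz₀⟩ := hng
    have hgz₀ : g z₀ ≠ 0 := hz₀
    have key0 : ∀ z, ((R z : ℝ) : ℂ) * Sg z = A z * g z := by
      intro z
      have h := h1 z
      rw [expand z] at h
      have h' : Sg z = A z / ((R z : ℝ) : ℂ) * g z := sub_eq_zero.1 h
      field_simp [hRne z] at h'
      linear_combination h'
    -- the function ψ = |g|²/R² has vanishing real derivative everywhere
    have hψ : ∀ z : ℂ, HasFDerivAt (fun w => Complex.normSq (g w) / (R w * R w))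
        (0 : ℂ →L[ℝ] ℝ) z := by
      intro z
      have hgR : HasFDerivAt g
          (((1 : ℂ →L[ℂ] ℂ).smulRight (2 * Sg z)).restrictScalars ℝ) z :=
        ((hg' z).hasFDerivAt).restrictScalars ℝ
      have hFR : ∀ i, HasFDerivAt (fun w => F w i)
          (((1 : ℂ →L[ℂ] ℂ).smulRight (D z i)).restrictScalars ℝ) z :=
        fun i => ((hFd i z).hasFDerivAt).restrictScalars ℝ
      obtain ⟨LN, hLN, hLNa⟩ : ∃ L' : ℂ →L[ℝ] ℝ,
          HasFDerivAt (fun w => Complex.normSq (g w)) L' z ∧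
          ∀ v, L' v = 2 * ((g z).re * (v * (2 * Sg z)).re + (g z).im * (v * (2 * Sg z)).im) := by
        have hre : HasFDerivAt (fun w => (g w).re)
            (Complex.reCLM.comp (((1 : ℂ →L[ℂ] ℂ).smulRight (2 * Sg z)).restrictScalars ℝ)) z :=
          (Complex.reCLM.hasFDerivAt).comp z hgR
        have him : HasFDerivAt (fun w => (g w).im)
            (Complex.imCLM.comp (((1 : ℂ →L[ℂ] ℂ).smulRight (2 * Sg z)).restrictScalars ℝ)) z :=
          (Complex.imCLM.hasFDerivAt).comp z hgR
        have h := (hre.mul hre).add (him.mul him)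
        have hfun : (fun w => (g w).re * (g w).re + (g w).im * (g w).im)
            = fun w => Complex.normSq (g w) := by
          funext w; rw [Complex.normSq_apply]
        rw [show ((fun w => (g w).re) * (fun w => (g w).re) + (fun w => (g w).im) * (fun w => (g w).im)) = fun w => (g w).re * (g w).re + (g w).im * (g w).im from rfl, hfun] at h
        refine ⟨_, h, fun v => ?_⟩
        simp [ContinuousLinearMap.smulRight_apply, smul_eq_mul]
        ring
      obtain ⟨LR, hLR, hLRa⟩ : ∃ L' : ℂ →L[ℝ] ℝ,
          HasFDerivAt R L' z ∧ ∀ v, L' v = 2 * (v * A z).re := by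
        have hterm : ∀ i : Fin (m + 1), HasFDerivAt (fun w => Complex.normSq (F w i))
            ((F z i).re • (Complex.reCLM.comp
                (((1 : ℂ →L[ℂ] ℂ).smulRight (D z i)).restrictScalars ℝ))
              + (F z i).re • (Complex.reCLM.comp
                (((1 : ℂ →L[ℂ] ℂ).smulRight (D z i)).restrictScalars ℝ))
              + ((F z i).im • (Complex.imCLM.comp
                (((1 : ℂ →L[ℂ] ℂ).smulRight (D z i)).restrictScalars ℝ))
              + (F z i).im • (Complex.imCLM.comp
                (((1 : ℂ →L[ℂ] ℂ).smulRight (D z i)).restrictScalars ℝ)))) z := by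
          intro i
          have hre : HasFDerivAt (fun w => (F w i).re)
              (Complex.reCLM.comp (((1 : ℂ →L[ℂ] ℂ).smulRight (D z i)).restrictScalars ℝ)) z :=
            (Complex.reCLM.hasFDerivAt).comp z (hFR i)
          have him : HasFDerivAt (fun w => (F w i).im)
              (Complex.imCLM.comp (((1 : ℂ →L[ℂ] ℂ).smulRight (D z i)).restrictScalars ℝ)) z :=
            (Complex.imCLM.hasFDerivAt).comp z (hFR i)
          have h := (hre.mul hre).add (him.mul him)
          have hfun : (fun w => (F w i).re * (F w i).re + (F w i).im * (F w i).im)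
              = fun w => Complex.normSq (F w i) := by
            funext w; rw [Complex.normSq_apply]
          rwa [show ((fun w => (F w i).re) * (fun w => (F w i).re) + (fun w => (F w i).im) * (fun w => (F w i).im)) = fun w => (F w i).re * (F w i).re + (F w i).im * (F w i).im from rfl, hfun] at h
        have h := HasFDerivAt.fun_sum (fun i (_ : i ∈ Finset.univ) => hterm i)
        refine ⟨_, h, fun v => ?_⟩
        simp only [ContinuousLinearMap.coe_sum', Finset.sum_apply,
          ContinuousLinearMap.add_apply, ContinuousLinearMap.smul_apply,
          ContinuousLinearMap.coe_comp', Function.comp_apply,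
          ContinuousLinearMap.coe_restrictScalars', ContinuousLinearMap.smulRight_apply,
          ContinuousLinearMap.one_apply, smul_eq_mul, Complex.reCLM_apply, Complex.imCLM_apply]
        have hterm2 : ∀ i : Fin (m + 1),
            (F z i).re * (v * D z i).re + (F z i).re * (v * D z i).re
              + ((F z i).im * (v * D z i).im + (F z i).im * (v * D z i).im)
            = 2 * ((starRingEnd ℂ) (F z i) * (v * D z i)).re := by
          intro i
          simp [Complex.mul_re, Complex.conj_re, Complex.conj_im]
          try ring
        rw [Finset.sum_congr rfl fun i _ => hterm2 i, ← Finset.mul_sum, ← Complex.re_sum]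
        congr 2
        rw [hAdef]
        simp only
        rw [Finset.mul_sum]
        exact Finset.sum_congr rfl fun i _ => by ring
      -- derivative of R * R and of the inverse
      have hρ : HasFDerivAt (fun w => R w * R w) (R z • LR + R z • LR) z := hLR.mul hLR
      have hρpos : 0 < R z * R z := mul_pos (hRpos z) (hRpos z)
      have hinv : HasDerivAt (fun t : ℝ => t⁻¹) (-((R z * R z) ^ 2)⁻¹) (R z * R z) :=
        hasDerivAt_inv (ne_of_gt hρpos)
      have hcomp : HasFDerivAt (fun w => (R w * R w)⁻¹)
          ((-((R z * R z) ^ 2)⁻¹) • (R z • LR + R z • LR)) z :=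
        HasDerivAt.comp_hasFDerivAt z hinv hρ
      have hmul := hLN.mul hcomp
      have hfinal : (Complex.normSq (g z)) • ((-((R z * R z) ^ 2)⁻¹) • (R z • LR + R z • LR))
          + (R z * R z)⁻¹ • LN = 0 := by
        ext v
        simp only [ContinuousLinearMap.add_apply, ContinuousLinearMap.smul_apply,
          ContinuousLinearMap.zero_apply, smul_eq_mul, hLNa v, hLRa v]
        -- key complex identity
        have hcx : ((R z : ℝ) : ℂ) * (starRingEnd ℂ (g z) * (v * (2 * Sg z)))
            = 2 * ((Complex.normSq (g z) : ℝ) : ℂ) * (v * A z) := by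
          have h2 : ((R z : ℝ) : ℂ) * (2 * Sg z) = 2 * (A z * g z) := by
            linear_combination 2 * key0 z
          calc ((R z : ℝ) : ℂ) * (starRingEnd ℂ (g z) * (v * (2 * Sg z)))
              = starRingEnd ℂ (g z) * v * (((R z : ℝ) : ℂ) * (2 * Sg z)) := by ring
            _ = starRingEnd ℂ (g z) * v * (2 * (A z * g z)) := by rw [h2]
            _ = 2 * (g z * starRingEnd ℂ (g z)) * (v * A z) := by ring
            _ = 2 * ((Complex.normSq (g z) : ℝ) : ℂ) * (v * A z) := by
                rw [Complex.mul_conj]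
        have hre := congrArg Complex.re hcx
        rw [Complex.re_ofReal_mul] at hre
        have hre2 : (starRingEnd ℂ (g z) * (v * (2 * Sg z))).re
            = (g z).re * (v * (2 * Sg z)).re + (g z).im * (v * (2 * Sg z)).im := by
          simp [Complex.mul_re, Complex.conj_re, Complex.conj_im]
          try ring
        rw [hre2] at hre
        have hre3 : (2 * ((Complex.normSq (g z) : ℝ) : ℂ) * (v * A z)).re
            = 2 * Complex.normSq (g z) * (v * A z).re := by
          have : (2 * ((Complex.normSq (g z) : ℝ) : ℂ) * (v * A z))
              = (((2 * Complex.normSq (g z) : ℝ)) : ℂ) * (v * A z) := by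
            push_cast; ring
          rw [this, Complex.re_ofReal_mul]
        rw [hre3] at hre
        -- now pure real algebra
        have hrne : R z ≠ 0 := ne_of_gt (hRpos z)
        set X : ℝ := (g z).re * (v * (2 * Sg z)).re + (g z).im * (v * (2 * Sg z)).im with hXdef
        set Y : ℝ := (v * A z).re with hYdef
        have hX : X = 2 * Complex.normSq (g z) * Y / R z := by
          field_simp
          linear_combination hre
        rw [hX]
        field_simp
        ring
      rw [hfinal] at hmul
      have hfun2 : (fun w => Complex.normSq (g w) * (R w * R w)⁻¹)
          = fun w => Complex.normSq (g w) / (R w * R w) := by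
        funext w; rw [div_eq_mul_inv]
      rwa [show ((fun w => Complex.normSq (g w)) * fun w => (R w * R w)⁻¹) = fun w => Complex.normSq (g w) * (R w * R w)⁻¹ from rfl, hfun2] at hmul
    -- ψ is constant
    have hconst : ∀ z, Complex.normSq (g z) / (R z * R z)
        = Complex.normSq (g z₀) / (R z₀ * R z₀) := fun z =>
      is_const_of_fderiv_eq_zero (𝕜 := ℝ) (fun w => (hψ w).differentiableAt)
        (fun w => (hψ w).fderiv) z z₀
    set c : ℝ := Complex.normSq (g z₀) / (R z₀ * R z₀) with hcdef
    have hcpos : 0 < c := div_pos (Complex.normSq_pos.2 hgz₀) (mul_pos (hRpos z₀) (hRpos z₀))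
    have hNz : ∀ z, Complex.normSq (g z) = c * (R z * R z) := by
      intro z
      have h := hconst z
      rw [div_eq_iff (ne_of_gt (mul_pos (hRpos z) (hRpos z)))] at h
      exact h
    have hgne : ∀ z, g z ≠ 0 := by
      intro z h0
      have := hNz z
      rw [h0] at this
      simp at this
      rcases this with h | h
      · exact absurd h (ne_of_gt hcpos)
      · nlinarith [hRpos z]
    have hgd : Differentiable ℂ g := Differentiable.fun_sum fun i _ => (hhol i).mul (hhol i)
    -- Liouville: F z i₀ * F z j / g z is constant
    obtain ⟨i₀, hi₀⟩ := Function.ne_iff.1 (hnz z₀)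
    have hq : ∀ (j : Fin (m + 1)) (z : ℂ), F z i₀ * F z j / g z = F z₀ i₀ * F z₀ j / g z₀ := by
      intro j z
      have hdiff : Differentiable ℂ (fun w => F w i₀ * F w j / g w) :=
        ((hhol i₀).mul (hhol j)).div hgd hgne
      refine hdiff.apply_eq_apply_of_bounded ?_ z z₀
      rw [isBounded_iff_forall_norm_le]
      refine ⟨Real.sqrt (1 / c), ?_⟩
      rintro x ⟨w, rfl⟩
      have hb : ∀ i, Complex.normSq (F w i) ≤ R w := fun i =>
        Finset.single_le_sum (f := fun j => Complex.normSq (F w j))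
          (fun j _ => Complex.normSq_nonneg _) (Finset.mem_univ i)
      have h1 : Complex.normSq (F w i₀ * F w j / g w) ≤ 1 / c := by
        rw [map_div₀, map_mul, hNz w]
        rw [div_le_div_iff₀ (mul_pos hcpos (mul_pos (hRpos w) (hRpos w))) hcpos]
        have h2 := hb i₀
        have h3 := hb j
        have h5 := Complex.normSq_nonneg (F w j)
        have h6 := hRpos w
        have h8 : Complex.normSq (F w i₀) * Complex.normSq (F w j) ≤ R w * R w :=
          mul_le_mul h2 h3 h5 h6.le
        nlinarith [hcpos.le]
      have h7 : ‖F w i₀ * F w j / g w‖ = Real.sqrt (Complex.normSq (F w i₀ * F w j / g w)) := by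
        rw [Complex.norm_def]
      rw [h7]
      exact Real.sqrt_le_sqrt h1
    set b : Fin (m + 1) → ℂ := fun j => F z₀ i₀ * F z₀ j / g z₀ with hbdef
    have hq' : ∀ (j : Fin (m + 1)) (z : ℂ), F z i₀ * F z j = b j * g z := by
      intro j z
      have h := hq j z
      rw [div_eq_iff (hgne z)] at h
      exact h
    have hb0 : b i₀ ≠ 0 := by
      simp only [hbdef]
      exact div_ne_zero (mul_ne_zero hi₀ hi₀) hgz₀
    have hFi₀ : ∀ z, F z i₀ ≠ 0 := by
      intro z h0
      have h := hq' i₀ z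
      rw [h0, zero_mul] at h
      exact mul_ne_zero hb0 (hgne z) h.symm
    have hcol : ∀ (j : Fin (m + 1)) (z : ℂ), F z j = b j / b i₀ * F z i₀ := by
      intro j z
      apply mul_left_cancel₀ (hFi₀ z)
      calc F z i₀ * F z j = b j * g z := hq' j z
        _ = b j / b i₀ * (b i₀ * g z) := by field_simp
        _ = b j / b i₀ * (F z i₀ * F z i₀) := by rw [← hq' i₀ z]
        _ = F z i₀ * (b j / b i₀ * F z i₀) := by ring
    -- contradiction with linear fullness
    obtain ⟨j₀, hj₀⟩ : ∃ j₀ : Fin (m + 1), j₀ ≠ i₀ := by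
      refine ⟨⟨if i₀.val = 0 then 1 else 0, by split <;> omega⟩, ?_⟩
      intro he
      apply_fun Fin.val at he
      simp only at he
      split at he <;> omega
    set v : Fin (m + 1) → ℂ := fun i =>
      if i = i₀ then starRingEnd ℂ (b j₀ / b i₀) else if i = j₀ then -1 else 0 with hvdef
    have hvsum : ∀ z, ∑ i, F z i * starRingEnd ℂ (v i) = 0 := by
      intro z
      have hterm : ∀ i ∈ Finset.univ, F z i * starRingEnd ℂ (v i)
          = ((if i = i₀ then b j₀ / b i₀ else 0)
              + (if i = j₀ then -(b j₀ / b i₀) else 0)) * F z i₀ := by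
        intro i _
        by_cases hc1 : i = i₀
        · rw [hc1]
          have h5 : i₀ ≠ j₀ := Ne.symm hj₀
          simp only [hvdef, if_pos, if_neg h5, Complex.conj_conj, add_zero]
          ring
        · by_cases hc2 : i = j₀
          · rw [hc2]
            rw [hcol j₀ z]
            simp only [hvdef, if_neg hj₀, if_pos, map_neg, map_one, zero_add]
            ring
          · simp [hvdef, hc1, hc2]
      rw [Finset.sum_congr rfl hterm, ← Finset.sum_mul]
      have hzero : (∑ i, ((if i = i₀ then b j₀ / b i₀ else 0)
          + (if i = j₀ then -(b j₀ / b i₀) else 0))) = 0 := by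
        rw [Finset.sum_add_distrib]
        simp [Finset.sum_ite_eq']
      rw [hzero, zero_mul]
    have hv0 := hfull v hvsum
    have hvj : v j₀ = -1 := by simp [hvdef, hj₀]
    rw [hv0] at hvj
    simp only [Pi.zero_apply] at hvj
    norm_num at hvj
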